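/- Let F: R^d → R be twice differentiable with L_2-Lipschitz Hessian. For any x, h ∈ R^d, any vector v and symmetric matrix U, and any M > 0, if h is a critical point of m(u) = ⟨v,u⟩ + (1/2)⟨Uu,u⟩ + (M/6)‖u‖^3 (i.e. v + Uh + (M/2)‖h‖h = 0), then ‖∇F(x+h)‖ ≤ ((L_2 + 2M)/2)‖h‖^2 + ‖∇F(x) - v‖ + (1/(2M))‖∇²F(x) - U‖_op². -/

import Mathlib

theorem stmt_9 {d : ℕ} (F : EuclideanSpace ℝ (Fin d) → ℝ) (L₂ : ℝ)
    (hF : Differentiable ℝ F) (hF' : Differentiable ℝ (gradient F))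
    (hLip : ∀ x y, ‖fderiv ℝ (gradient F) x - fderiv ℝ (gradient F) y‖ ≤ L₂ * ‖x - y‖)
    (x h v : EuclideanSpace ℝ (Fin d))
    (U : EuclideanSpace ℝ (Fin d) →L[ℝ] EuclideanSpace ℝ (Fin d)) (hU : IsSelfAdjoint U)
    (M : ℝ) (hM : 0 < M)
    (hcrit : v + U h + ((M / 2) * ‖h‖) • h = 0) :
    ‖gradient F (x + h)‖ ≤ (L₂ + 2 * M) / 2 * ‖h‖ ^ 2 + ‖gradient F x - v‖
      + (1 / (2 * M)) * ‖fderiv ℝ (gradient F) x - U‖ ^ 2 := by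
  set G := gradient F with hG
  set H := fderiv ℝ G x with hH
  -- Taylor bound : ‖G (x+h) - G x - H h‖ ≤ L₂/2 ‖h‖²
  have taylor : ‖G (x + h) - G x - H h‖ ≤ L₂ / 2 * ‖h‖ ^ 2 := by
    set f : ℝ → EuclideanSpace ℝ (Fin d) := fun t => G (x + t • h) - G x - t • H h with hf
    have hderiv : ∀ t : ℝ, HasDerivAt f (fderiv ℝ G (x + t • h) h - H h) t := by
      intro t
      have hc : HasDerivAt (fun t : ℝ => x + t • h) h t := by
        simpa using ((hasDerivAt_id t).smul_const h).const_add x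
      have h1 : HasDerivAt (fun t : ℝ => G (x + t • h)) (fderiv ℝ G (x + t • h) h) t :=
        by convert (hF' (x + t • h)).hasFDerivAt.comp_hasDerivAt t hc using 1 <;> rfl
      convert (h1.sub_const (G x)).sub ((hasDerivAt_id t).smul_const (H h)) using 1
      · rfl
      · rfl
      · rfl
      · rfl
      · simp
    have key : ∀ t ∈ Set.Icc (0:ℝ) 1, ‖f t‖ ≤ L₂ / 2 * ‖h‖ ^ 2 * t ^ 2 := by
      intro t ht
      refine image_norm_le_of_norm_deriv_right_le_deriv_boundary
        (f := f) (a := 0) (b := 1)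
        (f' := fun t => fderiv ℝ G (x + t • h) h - H h)
        (fun s _ => (hderiv s).continuousAt.continuousWithinAt)
        (fun s _ => (hderiv s).hasDerivWithinAt)
        ?_ (B := fun t => L₂ / 2 * ‖h‖ ^ 2 * t ^ 2)
        (B' := fun t => L₂ * ‖h‖ ^ 2 * t) ?_ ?_ ht
      · simp [hf]
      · intro s
        have := ((hasDerivAt_pow 2 s).const_mul (L₂ / 2 * ‖h‖ ^ 2))
        convert this using 1
        · rfl
        · rfl
        · ring
      · intro s hs
        have h2 : ‖fderiv ℝ G (x + s • h) h - H h‖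
            ≤ ‖fderiv ℝ G (x + s • h) - H‖ * ‖h‖ := by
          have h2' := (fderiv ℝ G (x + s • h) - H).le_opNorm h
          rwa [ContinuousLinearMap.sub_apply] at h2'
        have h3 : ‖fderiv ℝ G (x + s • h) - H‖ ≤ L₂ * (s * ‖h‖) := by
          have h4 := hLip (x + s • h) x
          have he : x + s • h - x = s • h := by abel
          rwa [he, norm_smul, Real.norm_eq_abs, abs_of_nonneg hs.1] at h4
        calc ‖fderiv ℝ G (x + s • h) h - H h‖ ≤ ‖fderiv ℝ G (x + s • h) - H‖ * ‖h‖ := h2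
          _ ≤ L₂ * (s * ‖h‖) * ‖h‖ := by
              apply mul_le_mul_of_nonneg_right h3 (norm_nonneg _)
          _ = L₂ * ‖h‖ ^ 2 * s := by ring
    have := key 1 (by norm_num)
    simpa [hf] using this
  set R := G (x + h) - G x - H h with hR
  -- decomposition
  have hdecomp : G (x + h) = R + (H - U) h + (G x - v) - ((M / 2) * ‖h‖) • h := by
    have hUh : U h = -v - ((M / 2) * ‖h‖) • h := by
      have := hcrit; linear_combination (norm := module) this
    rw [ContinuousLinearMap.sub_apply, hUh, hR]
    abel
  have hUb : ‖(H - U) h‖ ≤ (1 / (2 * M)) * ‖H - U‖ ^ 2 + M / 2 * ‖h‖ ^ 2 := by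
    have h1 : ‖(H - U) h‖ ≤ ‖H - U‖ * ‖h‖ := (H - U).le_opNorm h
    have gen : ∀ a b : ℝ, a * b ≤ 1 / (2 * M) * a ^ 2 + M / 2 * b ^ 2 := by
      intro a b
      rw [← sub_nonneg]
      have he : 1 / (2 * M) * a ^ 2 + M / 2 * b ^ 2 - a * b
          = (a - M * b) ^ 2 / (2 * M) := by
        field_simp
        ring
      rw [he]
      exact div_nonneg (sq_nonneg _) (by linarith)
    exact h1.trans (gen _ _)
  have hsm : ‖((M / 2) * ‖h‖) • h‖ = M / 2 * ‖h‖ ^ 2 := by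
    rw [norm_smul, Real.norm_eq_abs, abs_of_nonneg (by positivity)]
    ring
  calc ‖G (x + h)‖ = ‖R + (H - U) h + (G x - v) - ((M / 2) * ‖h‖) • h‖ := by
        rw [← hdecomp]
    _ ≤ ‖R + (H - U) h + (G x - v)‖ + ‖((M / 2) * ‖h‖) • h‖ := norm_sub_le _ _
    _ ≤ (‖R‖ + ‖(H - U) h‖ + ‖G x - v‖) + ‖((M / 2) * ‖h‖) • h‖ := by
        gcongr
        exact (norm_add_le _ _).trans (by gcongr; exact norm_add_le _ _)
    _ ≤ (L₂ / 2 * ‖h‖ ^ 2 + ((1 / (2 * M)) * ‖H - U‖ ^ 2 + M / 2 * ‖h‖ ^ 2) + ‖G x - v‖)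
        + M / 2 * ‖h‖ ^ 2 := by
        rw [hsm]
        gcongr
    _ = (L₂ + 2 * M) / 2 * ‖h‖ ^ 2 + ‖G x - v‖ + (1 / (2 * M)) * ‖H - U‖ ^ 2 := by ring
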